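/- Correctness of the two-dimensional inverse Rosenblatt transform: let μ be a probability measure on ℝ × ℝ with first marginal ν, let F_ν(x) = ν((−∞, x]) be the cumulative distribution function of ν with generalized inverse F_ν^{-1}(p) = inf{x ∈ ℝ : p ≤ F_ν(x)}, and let G(t | x) denote the conditional cumulative distribution function of the second coordinate of μ given that the first coordinate equals x (a regular conditional CDF of μ with respect to its first marginal), with generalized inverse G^{-1}(p | x) = inf{t ∈ ℝ : p ≤ G(t | x)}. If V₀ and V₁ are independent random variables, each uniformly distributed on [0, 1], then the random vector (X₀, X₁) defined by X₀ = F_ν^{-1}(V₀) and X₁ = G^{-1}(V₁ | X₀) has law μ. -/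

import Mathlib

open MeasureTheory ProbabilityTheory Set Filter
open scoped Topology ENNReal

/-- Generalized inverse of the cumulative distribution function of a measure `ν` on `ℝ`:
`F_ν⁻¹(p) = inf {x : p ≤ F_ν x}` where `F_ν x = ν (Iic x)`. -/
noncomputable def cdfInv (ν : Measure ℝ) (p : ℝ) : ℝ :=
  sInf {x : ℝ | p ≤ (ν (Set.Iic x)).toReal}

/-- Generalized inverse, in its first argument, of the regular conditional CDF
`G(t | x) = condCDF μ x t` of the second coordinate of `μ` given the first: for
`p ∈ (0,1)`, `G⁻¹(p | x) = inf {t : p ≤ G(t | x)}`. -/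
noncomputable def condCDFInv (μ : Measure (ℝ × ℝ)) (x p : ℝ) : ℝ :=
  sInf {t : ℝ | p ≤ condCDF μ x t}

lemma quantile_le_iff (f : StieltjesFunction ℝ) (h0 : Tendsto f atBot (𝓝 0))
    (h1 : Tendsto f atTop (𝓝 1)) {p : ℝ} (hp0 : 0 < p) (hp1 : p < 1) (a : ℝ) :
    sInf {x | p ≤ f x} ≤ a ↔ p ≤ f a := by
  have hne : {x | p ≤ f x}.Nonempty := by
    obtain ⟨x, hx⟩ := (h1.eventually (eventually_gt_nhds hp1)).exists
    exact ⟨x, hx.le⟩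
  have hbdd : BddBelow {x | p ≤ f x} := by
    obtain ⟨x₀, hx₀⟩ := (h0.eventually (eventually_lt_nhds hp0)).exists
    refine ⟨x₀, fun y hy => ?_⟩
    by_contra h
    exact absurd (hy.trans (f.mono (le_of_not_ge h))) (not_le.2 hx₀)
  constructor
  · intro h
    set m := sInf {x | p ≤ f x} with hm
    have hev : ∀ y ∈ Ioi m, p ≤ f y := by
      intro y hy
      obtain ⟨x, hx, hxy⟩ := (csInf_lt_iff hbdd hne).mp hy
      exact hx.trans (f.mono hxy.le)
    have hpm : p ≤ f m := by
      have ht : Tendsto f (𝓝[>] m) (𝓝 (f m)) :=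
        ((f.right_continuous m).tendsto).mono_left
          (nhdsWithin_mono m Ioi_subset_Ici_self)
      exact ge_of_tendsto ht (eventually_nhdsWithin_of_forall hev)
    exact hpm.trans (f.mono h)
  · intro h
    exact csInf_le hbdd h

lemma cdfInv_le_iff (ν : Measure ℝ) [IsProbabilityMeasure ν] {p : ℝ}
    (hp0 : 0 < p) (hp1 : p < 1) (a : ℝ) :
    cdfInv ν p ≤ a ↔ p ≤ (ν (Set.Iic a)).toReal := by
  have h : cdfInv ν p = sInf {x | p ≤ cdf ν x} := by
    unfold cdfInv
    congr 1
    ext x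
    simp [cdf_eq_real, measureReal_def]
  rw [h, quantile_le_iff _ (tendsto_cdf_atBot ν) (tendsto_cdf_atTop ν) hp0 hp1,
    cdf_eq_real, measureReal_def]

lemma condCDFInv_le_iff (μ : Measure (ℝ × ℝ)) (x : ℝ) {p : ℝ}
    (hp0 : 0 < p) (hp1 : p < 1) (b : ℝ) :
    condCDFInv μ x p ≤ b ↔ p ≤ condCDF μ x b :=
  quantile_le_iff (condCDF μ x) (tendsto_condCDF_atBot μ x) (tendsto_condCDF_atTop μ x)
    hp0 hp1 b

lemma ext_of_Iic_rect (ρ₁ ρ₂ : Measure (ℝ × ℝ)) [IsProbabilityMeasure ρ₁]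
    [IsProbabilityMeasure ρ₂]
    (h : ∀ a b : ℝ, ρ₁ (Iic a ×ˢ Iic b) = ρ₂ (Iic a ×ˢ Iic b)) : ρ₁ = ρ₂ := by
  have hIic : (Real.measurableSpace : MeasurableSpace ℝ) = .generateFrom (range Iic) := by
    rw [BorelSpace.measurable_eq (α := ℝ), borel_eq_generateFrom_Iic]
  have hcs : IsCountablySpanning (range (Iic : ℝ → Set ℝ)) :=
    ⟨fun n => Iic n, fun n => mem_range_self _, by
      ext x
      simp only [mem_iUnion, mem_Iic, mem_univ, iff_true]
      exact ⟨⌈x⌉₊, Nat.le_ceil x⟩⟩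
  have hgen : (Prod.instMeasurableSpace : MeasurableSpace (ℝ × ℝ)) =
      .generateFrom (image2 (· ×ˢ ·) (range Iic) (range Iic)) := by
    rw [hIic]
    exact generateFrom_prod_eq hcs hcs
  refine ext_of_generate_finite _ hgen (isPiSystem_Iic.prod isPiSystem_Iic) ?_ (by simp)
  rintro s ⟨s₁, ⟨a, rfl⟩, s₂, ⟨b, rfl⟩, rfl⟩
  exact h a b

theorem inverse_rosenblatt_two_dim
    {Ω : Type*} [MeasurableSpace Ω] (P : Measure Ω) [IsProbabilityMeasure P]
    (μ : Measure (ℝ × ℝ)) [IsProbabilityMeasure μ]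
    (V₀ V₁ : Ω → ℝ) (hV₀ : Measurable V₀) (hV₁ : Measurable V₁)
    (hindep : IndepFun V₀ V₁ P)
    (hU₀ : P.map V₀ = volume.restrict (Set.Icc (0 : ℝ) 1))
    (hU₁ : P.map V₁ = volume.restrict (Set.Icc (0 : ℝ) 1)) :
    P.map (fun ω =>
      (cdfInv μ.fst (V₀ ω), condCDFInv μ (cdfInv μ.fst (V₀ ω)) (V₁ ω))) = μ := by
  set ν : Measure ℝ := μ.fst with hν
  set U : Measure ℝ := volume.restrict (Set.Icc (0 : ℝ) 1) with hU
  -- basic facts about U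
  have hUIic : ∀ c : ℝ, 0 ≤ c → c ≤ 1 → U (Iic c) = ENNReal.ofReal c := by
    intro c hc0 hc1
    rw [hU, Measure.restrict_apply measurableSet_Iic]
    have : Iic c ∩ Icc 0 1 = Icc 0 c := by
      ext x
      simp only [mem_inter_iff, mem_Iic, mem_Icc]
      exact ⟨fun h => ⟨h.2.1, h.1⟩, fun h => ⟨h.2, h.1, h.2.trans hc1⟩⟩
    rw [this, Real.volume_Icc, sub_zero]
  have hUprob : IsProbabilityMeasure U := by
    constructor
    rw [hU, Measure.restrict_apply_univ, Real.volume_Icc]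
    norm_num
  have hUae : ∀ᵐ u ∂U, u ∈ Ioo (0:ℝ) 1 := by
    rw [ae_iff]
    have hs : {u : ℝ | ¬u ∈ Ioo (0:ℝ) 1} = (Ioo (0:ℝ) 1)ᶜ := rfl
    rw [hs, hU, Measure.restrict_apply measurableSet_Ioo.compl]
    have : (Ioo (0:ℝ) 1)ᶜ ∩ Icc 0 1 = Icc (0:ℝ) 1 \ Ioo 0 1 := by
      rw [diff_eq, inter_comm]
    rw [this, Icc_diff_Ioo_same (by norm_num : (0:ℝ) ≤ 1)]
    exact (Set.toFinite _).measure_zero _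
  have hV₀ae : ∀ᵐ ω ∂P, V₀ ω ∈ Ioo (0:ℝ) 1 :=
    ae_of_ae_map hV₀.aemeasurable (hU₀ ▸ hUae)
  have hV₁ae : ∀ᵐ ω ∂P, V₁ ω ∈ Ioo (0:ℝ) 1 :=
    ae_of_ae_map hV₁.aemeasurable (hU₁ ▸ hUae)
  -- measurable modifications of the quantile functions
  set q₀ : ℝ → ℝ := fun p => if p ∈ Ioo (0:ℝ) 1 then cdfInv ν p else 0 with hq₀def
  set q₁ : ℝ × ℝ → ℝ := fun z => if z.2 ∈ Ioo (0:ℝ) 1 then condCDFInv μ z.1 z.2 else 0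
    with hq₁def
  have hq₀ : Measurable q₀ := by
    apply measurable_of_Iic
    intro a
    have : q₀ ⁻¹' Iic a =
        (Ioo (0:ℝ) 1 ∩ Iic ((ν (Set.Iic a)).toReal)) ∪ ((Ioo (0:ℝ) 1)ᶜ ∩ {p : ℝ | (0:ℝ) ≤ a}) := by
      ext p
      simp only [hq₀def, mem_preimage, mem_Iic, mem_union, mem_inter_iff, mem_compl_iff,
        mem_setOf_eq]
      by_cases hp : p ∈ Ioo (0:ℝ) 1
      · rw [if_pos hp]
        simp [hp, cdfInv_le_iff ν hp.1 hp.2 a]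
      · rw [if_neg hp]
        simp [hp]
    rw [this]
    exact ((measurableSet_Ioo.inter measurableSet_Iic).union
      (measurableSet_Ioo.compl.inter (MeasurableSet.const _)))
  have hq₁ : Measurable q₁ := by
    apply measurable_of_Iic
    intro b
    have : q₁ ⁻¹' Iic b =
        ({z : ℝ × ℝ | z.2 ∈ Ioo (0:ℝ) 1} ∩ {z : ℝ × ℝ | z.2 ≤ condCDF μ z.1 b}) ∪
        ({z : ℝ × ℝ | z.2 ∈ Ioo (0:ℝ) 1}ᶜ ∩ {z : ℝ × ℝ | (0:ℝ) ≤ b}) := by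
      ext z
      simp only [hq₁def, mem_preimage, mem_Iic, mem_union, mem_inter_iff, mem_compl_iff,
        mem_setOf_eq]
      by_cases hz : z.2 ∈ Ioo (0:ℝ) 1
      · rw [if_pos hz]
        simp [hz, condCDFInv_le_iff μ z.1 hz.1 hz.2 b]
      · rw [if_neg hz]
        simp [hz]
    rw [this]
    refine MeasurableSet.union ?_ ?_
    · exact (measurable_snd measurableSet_Ioo).inter
        (measurableSet_le measurable_snd ((measurable_condCDF μ b).comp measurable_fst))
    · exact (measurable_snd measurableSet_Ioo).compl.inter (MeasurableSet.const _)
  -- the modified random vector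
  set f' : Ω → ℝ × ℝ := fun ω => (q₀ (V₀ ω), q₁ (q₀ (V₀ ω), V₁ ω)) with hf'def
  have hf' : Measurable f' :=
    (hq₀.comp hV₀).prodMk (hq₁.comp ((hq₀.comp hV₀).prodMk hV₁))
  have hmapeq : P.map (fun ω =>
      (cdfInv ν (V₀ ω), condCDFInv μ (cdfInv ν (V₀ ω)) (V₁ ω))) = P.map f' := by
    apply Measure.map_congr
    filter_upwards [hV₀ae, hV₁ae] with ω h0 h1
    have e0 : q₀ (V₀ ω) = cdfInv ν (V₀ ω) := if_pos h0
    have e1 : q₁ (q₀ (V₀ ω), V₁ ω) = condCDFInv μ (q₀ (V₀ ω)) (V₁ ω) := if_pos h1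
    show (cdfInv ν (V₀ ω), condCDFInv μ (cdfInv ν (V₀ ω)) (V₁ ω)) =
      (q₀ (V₀ ω), q₁ (q₀ (V₀ ω), V₁ ω))
    rw [e1, e0]
  rw [hmapeq]
  -- the pushforward of U under q₀ is ν
  have hmapq₀ : U.map q₀ = ν := by
    have : IsProbabilityMeasure (U.map q₀) := Measure.isProbabilityMeasure_map hq₀.aemeasurable
    refine Measure.ext_of_Iic (U.map q₀) ν (fun a => ?_)
    rw [Measure.map_apply hq₀ measurableSet_Iic]
    have hae : q₀ ⁻¹' Iic a =ᵐ[U] Iic ((ν (Set.Iic a)).toReal) := by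
      rw [eventuallyEq_set]
      filter_upwards [hUae] with u hu
      have e0 : q₀ u = cdfInv ν u := if_pos hu
      simp only [mem_preimage, mem_Iic, e0]
      exact cdfInv_le_iff ν hu.1 hu.2 a
    rw [measure_congr hae, hUIic _ ENNReal.toReal_nonneg ?_, ENNReal.ofReal_toReal
      (measure_ne_top ν _)]
    calc (ν (Set.Iic a)).toReal ≤ (1 : ℝ≥0∞).toReal :=
          ENNReal.toReal_mono ENNReal.one_ne_top prob_le_one
      _ = 1 := by simp
  -- joint law of (V₀, V₁)
  have hjoint : P.map (fun ω => (V₀ ω, V₁ ω)) = U.prod U := by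
    have h := (indepFun_iff_map_prod_eq_prod_map_map hV₀.aemeasurable
      hV₁.aemeasurable).mp hindep
    rw [h, hU₀, hU₁]
  -- conclusion via rectangles
  have : IsProbabilityMeasure (P.map f') := Measure.isProbabilityMeasure_map hf'.aemeasurable
  refine ext_of_Iic_rect _ _ (fun a b => ?_)
  rw [Measure.map_apply hf' (measurableSet_Iic.prod measurableSet_Iic)]
  set Fa : ℝ := (ν (Set.Iic a)).toReal with hFa
  set T : Set (ℝ × ℝ) := {z | z.1 ≤ Fa ∧ z.2 ≤ condCDF μ (q₀ z.1) b} with hT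
  have hTmeas : MeasurableSet T := by
    refine MeasurableSet.inter ?_ ?_
    · exact measurableSet_le measurable_fst measurable_const
    · exact measurableSet_le measurable_snd ((measurable_condCDF μ b).comp (hq₀.comp measurable_fst))
  have hAe : f' ⁻¹' (Iic a ×ˢ Iic b) =ᵐ[P] (fun ω => (V₀ ω, V₁ ω)) ⁻¹' T := by
    rw [eventuallyEq_set]
    filter_upwards [hV₀ae, hV₁ae] with ω h0 h1
    have e0 : q₀ (V₀ ω) = cdfInv ν (V₀ ω) := if_pos h0
    have e1 : q₁ (q₀ (V₀ ω), V₁ ω) = condCDFInv μ (q₀ (V₀ ω)) (V₁ ω) := if_pos h1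
    simp only [mem_preimage, hf'def, mem_prod, mem_Iic, hT, mem_setOf_eq, e1]
    exact and_congr (e0 ▸ cdfInv_le_iff ν h0.1 h0.2 a)
      ((condCDFInv_le_iff μ (q₀ (V₀ ω)) h1.1 h1.2 b).symm).symm
  rw [measure_congr hAe, ← Measure.map_apply (hV₀.prodMk hV₁) hTmeas, hjoint,
    Measure.prod_apply hTmeas]
  have hsection : ∀ u : ℝ, U (Prod.mk u ⁻¹' T) =
      (Iic Fa).indicator (fun u => ENNReal.ofReal (condCDF μ (q₀ u) b)) u := by
    intro u
    by_cases hu : u ≤ Fa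
    · have : Prod.mk u ⁻¹' T = Iic (condCDF μ (q₀ u) b) := by
        ext v
        simp [hT, hu]
      rw [this, hUIic _ (condCDF_nonneg μ _ _) (condCDF_le_one μ _ _),
        indicator_of_mem (mem_Iic.mpr hu)]
    · have : Prod.mk u ⁻¹' T = ∅ := by
        ext v
        simp [hT, hu]
      rw [this, measure_empty, indicator_of_notMem (by simpa using hu)]
  calc ∫⁻ u, U (Prod.mk u ⁻¹' T) ∂U
      = ∫⁻ u, (Iic Fa).indicator (fun u => ENNReal.ofReal (condCDF μ (q₀ u) b)) u ∂U := by
        exact lintegral_congr hsection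
    _ = ∫⁻ u, (Iic a).indicator (fun x => ENNReal.ofReal (condCDF μ x b)) (q₀ u) ∂U := by
        refine lintegral_congr_ae ?_
        filter_upwards [hUae] with u hu
        have e0 : q₀ u = cdfInv ν u := if_pos hu
        have hiff : u ∈ Iic Fa ↔ q₀ u ∈ Iic a := by
          simp only [mem_Iic, e0]
          exact (cdfInv_le_iff ν hu.1 hu.2 a).symm
        by_cases h : u ∈ Iic Fa
        · rw [indicator_of_mem h, indicator_of_mem (hiff.mp h)]
        · rw [indicator_of_notMem h, indicator_of_notMem (fun hc => h (hiff.mpr hc))]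
    _ = ∫⁻ x, (Iic a).indicator (fun x => ENNReal.ofReal (condCDF μ x b)) x ∂(U.map q₀) := by
        exact (lintegral_map ((measurable_condCDF μ b).ennreal_ofReal.indicator
          measurableSet_Iic) hq₀).symm
    _ = ∫⁻ x in Iic a, ENNReal.ofReal (condCDF μ x b) ∂ν := by
        rw [hmapq₀, lintegral_indicator measurableSet_Iic]
    _ = μ (Iic a ×ˢ Iic b) := setLIntegral_condCDF μ b measurableSet_Iic
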